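/- Let G be an oligomorphic closed subgroup of Sym(ω) and M_G its canonical structure. Then for every 0 < k < ω, the expanded structure E^ex_{M_G}(k) is ω-categorical, i.e., its automorphism group acts oligomorphically on its domain. -/

import Mathlib

open FirstOrder

namespace Paper

variable (L : FirstOrder.Language) (M : Type*) [L.Structure M]

/-- The group of automorphisms of a first-order structure, with composition. -/
instance autGroup : Group (M ≃[L] M) where
  one := FirstOrder.Language.Equiv.refl L M
  mul f g := f.comp g
  inv := FirstOrder.Language.Equiv.symm
  mul_assoc _ _ _ := rfl
  one_mul f := FirstOrder.Language.Equiv.ext fun a => by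
    show (FirstOrder.Language.Equiv.refl L M).comp f a = f a; simp
  mul_one f := FirstOrder.Language.Equiv.ext fun a => by
    show f.comp (FirstOrder.Language.Equiv.refl L M) a = f a; simp
  inv_mul_cancel f := FirstOrder.Language.Equiv.ext fun a => by
    show f.symm.comp f a = FirstOrder.Language.Equiv.refl L M a; simp

@[simp] theorem aut_one_apply (a : M) : (1 : M ≃[L] M) a = a := by
  show FirstOrder.Language.Equiv.refl L M a = a; simp
@[simp] theorem aut_mul_apply (f g : M ≃[L] M) (a : M) : (f * g) a = f (g a) := rfl
@[simp] theorem aut_inv_apply (f : M ≃[L] M) (a : M) : f⁻¹ a = f.symm a := rfl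
@[simp] theorem aut_coe_mul (f g : M ≃[L] M) : ⇑(f * g) = ⇑f ∘ ⇑g := rfl

/-- The natural action of the automorphism group on the structure. -/
instance autAction : MulAction (M ≃[L] M) M where
  smul f a := f a
  one_smul _ := rfl
  mul_smul _ _ _ := rfl

@[simp] theorem aut_smul_def (f : M ≃[L] M) (a : M) : f • a = f a := rfl

/-- The topology of pointwise convergence on the automorphism group (the domain
being regarded as discrete). -/
instance autTopology : TopologicalSpace (M ≃[L] M) :=
  letI : TopologicalSpace M := ⊥
  TopologicalSpace.induced (fun g => (g : M → M)) Pi.topologicalSpace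

/-- The pointwise stabilizer `G_(A)` of a set `A ⊆ M` in `Aut(M)`. -/
def pstab (A : Set M) : Subgroup (M ≃[L] M) where
  carrier := {g | ∀ a ∈ A, g a = a}
  one_mem' := fun _ _ => rfl
  mul_mem' := by
    intro f g hf hg a ha
    simp only [Set.mem_setOf_eq] at *
    rw [aut_mul_apply, hg a ha, hf a ha]
  inv_mem' := by
    intro f hf a ha
    simp only [Set.mem_setOf_eq] at *
    rw [aut_inv_apply]
    conv_lhs => rw [← hf a ha]
    exact f.symm_apply_apply a

/-- The setwise stabilizer `G_{A}` of a set `A ⊆ M` in `Aut(M)`. -/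
def sstab (A : Set M) : Subgroup (M ≃[L] M) where
  carrier := {g | g '' A = A}
  one_mem' := by
    simp only [Set.mem_setOf_eq]
    ext a; simp [Set.mem_image]
  mul_mem' := by
    intro f g hf hg
    simp only [Set.mem_setOf_eq] at *
    rw [aut_coe_mul, Set.image_comp, hg, hf]
  inv_mem' := by
    intro f hf
    simp only [Set.mem_setOf_eq] at *
    conv_lhs => rw [← hf]
    rw [Set.image_image]
    ext a; constructor
    · rintro ⟨x, hx, rfl⟩
      simpa [f.symm_apply_apply] using hx
    · intro ha
      exact ⟨a, ha, f.symm_apply_apply a⟩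

/-- The Galois-algebraic closure of `A ⊆ M`: the set of elements with finite orbit
under the pointwise stabilizer of `A`. -/
def aclg (A : Set M) : Set M :=
  {b | (MulAction.orbit (pstab L M A) b).Finite}

/-- The Galois-definable closure of the empty set: elements fixed by every automorphism. -/
def dclg0 : Set M := {b | ∀ g : M ≃[L] M, g b = b}

/-- `p : K ≃ K'` is an isomorphism between the induced substructures on `K` and `K'`. -/
def IsPartialIso (K K' : Set M) (p : K ≃ K') : Prop :=
  (∀ {n : ℕ} (f : L.Functions n) (x : Fin n → K),
      ∃ h : FirstOrder.Language.Structure.funMap f (fun i => (x i : M)) ∈ K,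
        (p ⟨FirstOrder.Language.Structure.funMap f (fun i => (x i : M)), h⟩ : M) =
          FirstOrder.Language.Structure.funMap f (fun i => (p (x i) : M))) ∧
  (∀ {n : ℕ} (r : L.Relations n) (x : Fin n → K),
      FirstOrder.Language.Structure.RelMap r (fun i => (x i : M)) ↔
        FirstOrder.Language.Structure.RelMap r (fun i => (p (x i) : M)))

/-- `A(M)`: the collection of Galois-algebraic closures of finite subsets of `M`. -/
def AA : Set (Set M) := {K | ∃ A : Set M, A.Finite ∧ K = aclg L M A}

/-- Hypothesis (H). -/
structure HypH : Prop where
  countable : Countable M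
  locallyFinite : ∀ A : Set M, A.Finite → (aclg L M A).Finite
  extendsIso : ∀ (K K' : Set M), K.Finite → K'.Finite →
    aclg L M K = K → aclg L M K' = K' → ∀ p : K ≃ K', IsPartialIso L M K K' p →
      ∃ g : M ≃[L] M, ∀ a : K, g a = (p a : M)
  openSandwich : ∀ H : Subgroup (M ≃[L] M), IsOpen (H : Set (M ≃[L] M)) →
    ∃! K : Set M, K.Finite ∧ aclg L M K = K ∧ pstab L M K ≤ H ∧ H ≤ sstab L M K


/-- Generalized pointwise stabilizer `G_(K,L)`. -/
def genStab (K : Set M) (Lsub : Subgroup (Equiv.Perm K)) : Subgroup (M ≃[L] M) where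
  carrier := {f | ∃ p ∈ Lsub, ∀ a : K, f a = (p a : M)}
  one_mem' := ⟨1, Lsub.one_mem, fun a => by simp⟩
  mul_mem' := by
    rintro f g ⟨p, hp, hfp⟩ ⟨q, hq, hgq⟩
    refine ⟨p * q, Lsub.mul_mem hp hq, fun a => ?_⟩
    rw [aut_mul_apply, hgq a, hfp (q a)]
    rfl
  inv_mem' := by
    rintro f ⟨p, hp, hfp⟩
    refine ⟨p⁻¹, Lsub.inv_mem hp, fun a => ?_⟩
    have h1 : f ((p⁻¹ a : K) : M) = ((p (p⁻¹ a) : K) : M) := hfp _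
    rw [Equiv.Perm.coe_inv, Equiv.apply_symm_apply] at h1
    rw [aut_inv_apply, ← h1, FirstOrder.Language.Equiv.symm_apply_apply]
    rfl

/-- `GS(M)`: the collection of generalized pointwise stabilizers. -/
def GS : Set (Subgroup (M ≃[L] M)) :=
  {H | ∃ K ∈ AA L M, ∃ Lsub : Subgroup (Equiv.Perm K),
    (∀ p ∈ Lsub, IsPartialIso L M K K (p : K ≃ K)) ∧ H = genStab L M K Lsub}

/-- `PS(M)`: the collection of pointwise stabilizers of members of `A(M)`. -/
def PS : Set (Subgroup (M ≃[L] M)) := {H | ∃ K ∈ AA L M, H = pstab L M K}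

/-- The lattice `A₊(M)`. -/
def Aplus : Set (Set M) := AA L M ∪ {dclg0 L M}

/-- Covering relation in `S`. -/
def hasseCovers {α : Type*} (S : Set (Set α)) (A B : Set α) : Prop :=
  A ∈ S ∧ B ∈ S ∧ A ⊂ B ∧ ¬∃ C ∈ S, A ⊂ C ∧ C ⊂ B

/-- Adjacency in the Hasse diagram of `S`. -/
def hasseAdj {α : Type*} (S : Set (Set α)) (A B : Set α) : Prop :=
  hasseCovers S A B ∨ hasseCovers S B A

/-- `A_k(M)`: members of `A(M)` distinct from `dcl(∅)` at distance `≤ k` from the bottom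
of the lattice `A₊(M)` in its Hasse diagram. -/
def Ak (k : ℕ) : Set (Set M) :=
  {K | K ∈ AA L M ∧ K ≠ dclg0 L M ∧ ∃ (j : ℕ) (c : Fin (j + 1) → Set M), j ≤ k ∧
    c 0 = dclg0 L M ∧ c (Fin.last j) = K ∧
    ∀ i : Fin j, hasseAdj (Aplus L M) (c i.castSucc) (c i.succ)}

/-- `A_k(M)` for `k ≤ ω`, with `A_ω(M) = A(M)`. -/
def AkE (k : ℕ∞) : Set (Set M) :=
  match k with
  | ⊤ => AA L M
  | (k : ℕ) => Ak L M k

/-- `k_M`: the supremum of lengths of strict chains of Galois-algebraic closures of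
singletons. -/
noncomputable def kM : ℕ∞ :=
  ⨆ k ∈ {k : ℕ | ∃ a : Fin k → M, ∀ i j : Fin k, i < j → aclg L M {a i} ⊂ aclg L M {a j}},
    (k : ℕ∞)

/-- The domain of the expanded structure `E^ex_M(k)`: triples `(K, p, K')` with
`K, K' ∈ A_k(M)` and `p : K ≅ K'`. -/
structure ExTriple (k : ℕ∞) where
  K : Set M
  K' : Set M
  hK : K ∈ AkE L M k
  hK' : K' ∈ AkE L M k
  p : K ≃ K'
  iso : IsPartialIso L M K K' p

/-- The unary predicate of `E^ex_M(k)` holding of the identity triples. -/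
def IsIdTriple {k : ℕ∞} (t : ExTriple L M k) : Prop :=
  t.K = t.K' ∧ ∀ a : t.K, (t.p a : M) = (a : M)

/-- The `n`-ary relation `E_n` of `E^ex_M(k)`. -/
def ERel {k : ℕ∞} {n : ℕ} (x : Fin n → ExTriple L M k) : Prop :=
  ∃ g : M ≃[L] M, ∀ (i : Fin n) (a : (x i).K), g a = ((x i).p a : M)

/-- The binary relation `Dom` of `E^ex_M(k)`. -/
def DomRel {k : ℕ∞} (t s : ExTriple L M k) : Prop := IsIdTriple L M s ∧ s.K = t.K

/-- The binary relation `Cod` of `E^ex_M(k)`. -/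
def CodRel {k : ℕ∞} (t s : ExTriple L M k) : Prop := IsIdTriple L M s ∧ s.K = t.K'

variable {L M}

/-- A bijection between the domains of `E^ex_M(k)` and `E^ex_N(k)` is an isomorphism
if it preserves the identity-triple predicate, all the relations `E_n`, `Dom` and `Cod`. -/
def IsExIso {L' : FirstOrder.Language} {N : Type*} [L'.Structure N] {k : ℕ∞}
    (F : ExTriple L M k ≃ ExTriple L' N k) : Prop :=
  (∀ t, IsIdTriple L M t ↔ IsIdTriple L' N (F t)) ∧
  (∀ (n : ℕ) (x : Fin n → ExTriple L M k), ERel L M x ↔ ERel L' N (F ∘ x)) ∧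
  (∀ t s, DomRel L M t s ↔ DomRel L' N (F t) (F s)) ∧
  (∀ t s, CodRel L M t s ↔ CodRel L' N (F t) (F s))

variable (L M)

/-- The automorphism group of the expanded structure `E^ex_M(k)`. -/
def exAut (k : ℕ∞) : Subgroup (Equiv.Perm (ExTriple L M k)) where
  carrier := {σ | IsExIso (σ : ExTriple L M k ≃ ExTriple L M k)}
  one_mem' := by
    refine ⟨fun t => ?_, fun n x => ?_, fun t s => ?_, fun t s => ?_⟩ <;>
      simp [Equiv.Perm.coe_one, Function.comp_def]
  mul_mem' := by
    rintro σ τ ⟨hσ1, hσ2, hσ3, hσ4⟩ ⟨hτ1, hτ2, hτ3, hτ4⟩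
    refine ⟨fun t => ?_, fun n x => ?_, fun t s => ?_, fun t s => ?_⟩
    · exact (hτ1 t).trans (hσ1 (τ t))
    · exact (hτ2 n x).trans (hσ2 n (τ ∘ x))
    · exact (hτ3 t s).trans (hσ3 (τ t) (τ s))
    · exact (hτ4 t s).trans (hσ4 (τ t) (τ s))
  inv_mem' := by
    rintro σ ⟨hσ1, hσ2, hσ3, hσ4⟩
    refine ⟨fun t => ?_, fun n x => ?_, fun t s => ?_, fun t s => ?_⟩
    · have := hσ1 (σ⁻¹ t); simpa using this.symm
    · have := hσ2 n (⇑(σ⁻¹) ∘ x)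
      have hx : ⇑σ ∘ ⇑(σ⁻¹) ∘ x = x := by
        funext i; simp
      rw [hx] at this
      exact this.symm
    · have := hσ3 (σ⁻¹ t) (σ⁻¹ s); simpa using this.symm
    · have := hσ4 (σ⁻¹ t) (σ⁻¹ s); simpa using this.symm

/-- The subgroup of topological automorphisms of a topological group. -/
def topMulAut (G : Type*) [Group G] [TopologicalSpace G] : Subgroup (MulAut G) where
  carrier := {α | Continuous (α : G → G) ∧ Continuous (α.symm : G → G)}
  one_mem' := ⟨continuous_id, continuous_id⟩
  mul_mem' := by
    rintro α β ⟨hα1, hα2⟩ ⟨hβ1, hβ2⟩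
    exact ⟨hα1.comp hβ1, hβ2.comp hα2⟩
  inv_mem' := by
    rintro α ⟨h1, h2⟩
    exact ⟨h2, h1⟩

/-- A group isomorphism between topological groups which is a homeomorphism. -/
def IsTopIso {G H : Type*} [Group G] [Group H] [TopologicalSpace G] [TopologicalSpace H]
    (e : G ≃* H) : Prop :=
  Continuous (e : G → H) ∧ Continuous (e.symm : H → G)

/-- The natural homomorphism from `Aut(M)` to the symmetric group on `M`. -/
def toPerm : (M ≃[L] M) →* Equiv.Perm M where
  toFun g := g.toEquiv
  map_one' := rfl
  map_mul' f g := Equiv.ext fun _ => rfl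

/-- The orbit equivalence relation on `n`-tuples. -/
def orbRel (n : ℕ) (x y : Fin n → M) : Prop := ∃ g : M ≃[L] M, ∀ i, g (x i) = y i

/-- The automorphism group of the orbital structure `E_M`: permutations of `M`
preserving each orbit equivalence relation. -/
def autOrbital : Subgroup (Equiv.Perm M) where
  carrier := {f | ∀ (n : ℕ) (x y : Fin n → M),
    orbRel L M n x y ↔ orbRel L M n (f ∘ x) (f ∘ y)}
  one_mem' := by intro n x y; simp [Equiv.Perm.coe_one]
  mul_mem' := by
    intro f g hf hg n x y
    exact (hg n x y).trans (hf n (g ∘ x) (g ∘ y))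
  inv_mem' := by
    intro f hf n x y
    have := hf n (⇑(f⁻¹) ∘ x) (⇑(f⁻¹) ∘ y)
    have hx : ⇑f ∘ ⇑(f⁻¹) ∘ x = x := by funext i; simp
    have hy : ⇑f ∘ ⇑(f⁻¹) ∘ y = y := by funext i; simp
    rw [hx, hy] at this
    exact this.symm

/-- `Aut°(E_M)`: automorphisms of the orbital structure preserving each orbit
equivalence class. -/
def autOrbitalFix : Subgroup (Equiv.Perm M) where
  carrier := {f | f ∈ autOrbital L M ∧ ∀ (n : ℕ) (x : Fin n → M), orbRel L M n x (f ∘ x)}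
  one_mem' := ⟨(autOrbital L M).one_mem, fun n x => ⟨1, fun i => by simp [Equiv.Perm.coe_one]⟩⟩
  mul_mem' := by
    rintro f g ⟨hf, hf2⟩ ⟨hg, hg2⟩
    refine ⟨(autOrbital L M).mul_mem hf hg, fun n x => ?_⟩
    obtain ⟨a, ha⟩ := hg2 n x
    obtain ⟨b, hb⟩ := hf2 n (g ∘ x)
    exact ⟨b * a, fun i => by rw [aut_mul_apply, ha i, hb i]; rfl⟩
  inv_mem' := by
    rintro f ⟨hf, hf2⟩
    refine ⟨(autOrbital L M).inv_mem hf, fun n x => ?_⟩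
    obtain ⟨a, ha⟩ := hf2 n (⇑(f⁻¹) ∘ x)
    refine ⟨a⁻¹, fun i => ?_⟩
    have hi := ha i
    simp only [Function.comp_apply, Equiv.Perm.coe_inv, Equiv.apply_symm_apply] at hi
    rw [← hi, aut_inv_apply, FirstOrder.Language.Equiv.symm_apply_apply]
    rfl

/-- A homogeneous structure: isomorphisms between finite substructures extend to
automorphisms. -/
def Homogeneous : Prop :=
  ∀ (K K' : Set M), K.Finite → K'.Finite → ∀ p : K ≃ K',
    IsPartialIso L M K K' p → ∃ g : M ≃[L] M, ∀ a : K, g a = (p a : M)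

/-- Weak elimination of imaginaries, phrased group-theoretically: every open subgroup is
sandwiched between the pointwise and setwise stabilizers of a unique smallest finite
Galois-algebraically closed set. -/
def HasWEI : Prop :=
  ∀ H : Subgroup (M ≃[L] M), IsOpen (H : Set (M ≃[L] M)) →
    ∃ K : Set M, (K.Finite ∧ aclg L M K = K ∧ pstab L M K ≤ H ∧ H ≤ sstab L M K) ∧
      ∀ K' : Set M, (K'.Finite ∧ aclg L M K' = K' ∧ pstab L M K' ≤ H ∧ H ≤ sstab L M K') →
        K ⊆ K'

/-- No algebraicity: every finite set is Galois-algebraically closed. -/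
def NoAlgebraicity : Prop := ∀ A : Set M, A.Finite → aclg L M A = A

/-- The small index property: every subgroup of index `< 2^ℵ₀` is open. -/
def SIP : Prop :=
  ∀ H : Subgroup (M ≃[L] M), Cardinal.mk ((M ≃[L] M) ⧸ H) < Cardinal.continuum →
    IsOpen (H : Set (M ≃[L] M))

/-- An oligomorphic action: finitely many orbits on `n`-tuples for every `n`. -/
def Oligo (G : Type*) [Group G] (X : Type*) [MulAction G X] : Prop :=
  ∀ n : ℕ, Finite (MulAction.orbitRel.Quotient G (Fin n → X))

end Paper

namespace Paper

/-- ω-categoricity: `M` is, up to isomorphism, the unique countable model of its complete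
first-order theory. -/
def IsOmegaCategorical (L : FirstOrder.Language) (M : Type w) [L.Structure M] : Prop :=
  Countable M ∧ ∀ (N : Type w) (iN : L.Structure N), Countable N → Nonempty N →
    (@FirstOrder.Language.Theory.Model L N iN (L.completeTheory M)) →
      Nonempty (@FirstOrder.Language.Equiv L N M iN _)


/-- The Polish group topology on `Sym(ω)`. -/
instance permTopology : TopologicalSpace (Equiv.Perm ℕ) :=
  letI : TopologicalSpace ℕ := ⊥
  TopologicalSpace.induced
    (fun g => ((g : ℕ → ℕ), ((g⁻¹ : Equiv.Perm ℕ) : ℕ → ℕ))) inferInstance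

/-- The canonical language of a permutation group `G ≤ Sym(ω)`: one `n`-ary relation
symbol for each orbit of `G` on `ωⁿ`. -/
def canonicalLanguage (G : Subgroup (Equiv.Perm ℕ)) : FirstOrder.Language where
  Functions := fun _ => Empty
  Relations := fun n => Quotient (MulAction.orbitRel G (Fin n → ℕ))

/-- The canonical structure `M_G` of `G ≤ Sym(ω)`: each orbit relation symbol names the
corresponding orbit. -/
instance canonicalStructure (G : Subgroup (Equiv.Perm ℕ)) :
    (canonicalLanguage G).Structure ℕ where
  funMap := fun f _ => f.elim
  RelMap := fun {n} r x => Quotient.mk (MulAction.orbitRel G (Fin n → ℕ)) x = r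

/-! ### Auxiliary lemmas -/

section Aux

theorem finite_quotient_of_code {α Q : Type*} [Finite Q] (s : Setoid α) (c : α → Q)
    (h : ∀ x y, c x = c y → s.r x y) : Finite (Quotient s) := by
  rcases isEmpty_or_nonempty α with hα | hα
  · exact Finite.of_surjective (Quotient.mk s) Quotient.mk_surjective
  · inhabit α
    classical
    refine Finite.of_surjective
      (fun q : Q => if h' : ∃ a, c a = q then Quotient.mk s h'.choose
        else Quotient.mk s default) ?_
    intro x
    induction x using Quotient.ind with
    | _ a =>
      refine ⟨c a, ?_⟩
      have h' : ∃ b, c b = c a := ⟨a, rfl⟩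
      dsimp only
      rw [dif_pos h']
      exact Quotient.sound (h _ _ h'.choose_spec)

variable {L : FirstOrder.Language} {M : Type*} [L.Structure M]

theorem pstab_mono {A B : Set M} (h : A ⊆ B) : pstab L M B ≤ pstab L M A :=
  fun g hg a ha => hg a (h ha)

theorem aclg_mono {A B : Set M} (h : A ⊆ B) : aclg L M A ⊆ aclg L M B := by
  intro b hb
  refine Set.Finite.subset hb ?_
  rintro _ ⟨⟨g, hg⟩, rfl⟩
  exact ⟨⟨g, pstab_mono h hg⟩, rfl⟩

theorem subset_aclg (A : Set M) : A ⊆ aclg L M A := by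
  intro a ha
  refine Set.Finite.subset (Set.finite_singleton a) ?_
  rintro _ ⟨⟨g, hg⟩, rfl⟩
  exact hg a ha

theorem dclg0_subset_aclg (A : Set M) : dclg0 L M ⊆ aclg L M A := by
  intro a ha
  refine Set.Finite.subset (Set.finite_singleton a) ?_
  rintro _ ⟨⟨g, hg⟩, rfl⟩
  exact ha g

end Aux
section Invariance

variable {L : FirstOrder.Language} {M : Type*} [L.Structure M]

theorem mem_pstab_iff {A : Set M} {g : M ≃[L] M} : g ∈ pstab L M A ↔ ∀ a ∈ A, g a = a :=
  Iff.rfl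

theorem smul_pstab_def {A : Set M} (h : ↥(pstab L M A)) (b : M) : h • b = (h : M ≃[L] M) b :=
  rfl

theorem orbit_pstab_image (g : M ≃[L] M) (A : Set M) (b : M) :
    MulAction.orbit (pstab L M (⇑g '' A)) (g b) = ⇑g '' MulAction.orbit (pstab L M A) b := by
  ext m
  constructor
  · rintro ⟨⟨h, hh⟩, rfl⟩
    have hmem : g⁻¹ * h * g ∈ pstab L M A := by
      intro a ha
      have : h (g a) = g a := hh (g a) ⟨a, ha, rfl⟩
      simp only [aut_mul_apply, aut_inv_apply, this, FirstOrder.Language.Equiv.symm_apply_apply]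
    refine ⟨(g⁻¹ * h * g) b, ⟨⟨g⁻¹ * h * g, hmem⟩, rfl⟩, ?_⟩
    show g ((g⁻¹ * h * g) b) = h • g b
    simp only [aut_mul_apply, aut_inv_apply, FirstOrder.Language.Equiv.apply_symm_apply]
    rfl
  · rintro ⟨m, ⟨⟨h, hh⟩, rfl⟩, rfl⟩
    have hmem : g * h * g⁻¹ ∈ pstab L M (⇑g '' A) := by
      rintro a ⟨a, ha, rfl⟩
      simp only [aut_mul_apply, aut_inv_apply, FirstOrder.Language.Equiv.symm_apply_apply]
      rw [hh a ha]
    refine ⟨⟨g * h * g⁻¹, hmem⟩, ?_⟩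
    show (g * h * g⁻¹) (g b) = g (h • b)
    simp only [aut_mul_apply, aut_inv_apply, FirstOrder.Language.Equiv.symm_apply_apply]
    rfl

theorem aclg_image (g : M ≃[L] M) (A : Set M) : aclg L M (⇑g '' A) = ⇑g '' aclg L M A := by
  ext m
  have hm : m = g (g.symm m) := (g.apply_symm_apply m).symm
  constructor
  · intro h
    refine ⟨g.symm m, ?_, (g.apply_symm_apply m)⟩
    have : (MulAction.orbit (pstab L M (⇑g '' A)) (g (g.symm m))).Finite := by rwa [← hm]
    rw [orbit_pstab_image] at this
    have h2 : (⇑g.symm '' (⇑g '' MulAction.orbit (pstab L M A) (g.symm m))).Finite :=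
      this.image _
    rwa [Set.image_image, Set.image_congr' (fun x => g.symm_apply_apply x), Set.image_id'] at h2
  · rintro ⟨b, hb, rfl⟩
    show (MulAction.orbit (pstab L M (⇑g '' A)) (g b)).Finite
    rw [orbit_pstab_image]
    exact hb.image _

theorem dclg0_image (g : M ≃[L] M) : ⇑g '' dclg0 L M = dclg0 L M := by
  ext m
  constructor
  · rintro ⟨b, hb, rfl⟩
    intro h
    have : (g⁻¹ * h * g) b = b := hb _
    have h2 := congrArg g this
    simp only [aut_mul_apply, aut_inv_apply, FirstOrder.Language.Equiv.apply_symm_apply] at h2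
    exact h2
  · intro hm
    refine ⟨g.symm m, ?_, g.apply_symm_apply m⟩
    intro h
    have : (g * h * g⁻¹) m = m := hm _
    simp only [aut_mul_apply, aut_inv_apply] at this
    have h2 := congrArg g.symm this
    rwa [FirstOrder.Language.Equiv.symm_apply_apply] at h2

theorem AA_image (g : M ≃[L] M) {K : Set M} (hK : K ∈ AA L M) : ⇑g '' K ∈ AA L M := by
  obtain ⟨A, hA, rfl⟩ := hK
  exact ⟨⇑g '' A, hA.image _, (aclg_image g A).symm⟩

theorem Aplus_image (g : M ≃[L] M) {K : Set M} (hK : K ∈ Aplus L M) : ⇑g '' K ∈ Aplus L M := by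
  rcases hK with hK | hK
  · exact Or.inl (AA_image g hK)
  · rw [Set.mem_singleton_iff] at hK
    subst hK
    exact Or.inr (by rw [Set.mem_singleton_iff, dclg0_image])

theorem image_ssubset (g : M ≃[L] M) {A B : Set M} (h : A ⊂ B) : ⇑g '' A ⊂ ⇑g '' B := by
  rw [Set.ssubset_def] at h ⊢
  refine ⟨Set.image_mono h.1, fun hc => h.2 ?_⟩
  intro b hb
  obtain ⟨a, ha, hab⟩ := hc ⟨b, hb, rfl⟩
  rwa [← g.injective hab]

theorem preimage_eq_of_image (g : M ≃[L] M) {A B : Set M} (h : ⇑g '' A = B) :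
    A = ⇑g.symm '' B := by
  subst h
  rw [Set.image_image]
  rw [Set.image_congr' (fun x => g.symm_apply_apply x), Set.image_id']

theorem hasseCovers_image (g : M ≃[L] M) {A B : Set M}
    (h : hasseCovers (Aplus L M) A B) : hasseCovers (Aplus L M) (⇑g '' A) (⇑g '' B) := by
  obtain ⟨hA, hB, hAB, hno⟩ := h
  refine ⟨Aplus_image g hA, Aplus_image g hB, image_ssubset g hAB, ?_⟩
  rintro ⟨C, hC, h1, h2⟩
  refine hno ⟨⇑g.symm '' C, Aplus_image g.symm hC, ?_, ?_⟩
  · have := image_ssubset g.symm h1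
    rwa [Set.image_image, Set.image_congr' (fun x => g.symm_apply_apply x), Set.image_id'] at this
  · have := image_ssubset g.symm h2
    rwa [Set.image_image, Set.image_congr' (fun x => g.symm_apply_apply x), Set.image_id'] at this

theorem hasseAdj_image (g : M ≃[L] M) {A B : Set M}
    (h : hasseAdj (Aplus L M) A B) : hasseAdj (Aplus L M) (⇑g '' A) (⇑g '' B) := by
  rcases h with h | h
  · exact Or.inl (hasseCovers_image g h)
  · exact Or.inr (hasseCovers_image g h)

theorem Ak_image (g : M ≃[L] M) {k : ℕ} {K : Set M} (hK : K ∈ Ak L M k) :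
    ⇑g '' K ∈ Ak L M k := by
  obtain ⟨hAA, hne, j, c, hj, h0, hlast, hadj⟩ := hK
  refine ⟨AA_image g hAA, ?_, j, fun i => ⇑g '' c i, hj, ?_, ?_, ?_⟩
  · intro hc
    apply hne
    rw [preimage_eq_of_image g hc, dclg0_image]
  · show ⇑g '' c 0 = _
    rw [h0, dclg0_image]
  · show ⇑g '' c (Fin.last j) = _
    rw [hlast]
  · intro i
    exact hasseAdj_image g (hadj i)

end Invariance
section Idem

variable {L : FirstOrder.Language} {M : Type*} [L.Structure M]

theorem aclg_idem {A : Set M} (hC : (aclg L M A).Finite) :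
    aclg L M (aclg L M A) = aclg L M A := by
  apply Set.Subset.antisymm _ (subset_aclg _)
  intro b hb
  set C := aclg L M A with hCdef
  have hmap : ∀ h : M ≃[L] M, h ∈ pstab L M A → ⇑h '' C = C := by
    intro h hh
    have hA : ⇑h '' A = A := by
      ext a
      constructor
      · rintro ⟨a, ha, rfl⟩
        rw [hh a ha]; exact ha
      · intro ha; exact ⟨a, ha, hh a ha⟩
    rw [hCdef, ← aclg_image h, hA]
  have hCfin : Finite ↥C := hC.to_subtype
  set R : Set (↥C → M) := {f | ∀ c : ↥C, f c ∈ C} with hR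
  have hRfin : R.Finite := by
    rw [Set.finite_coe_iff.symm]
    refine Finite.of_injective (fun f : ↥R => (fun c : ↥C => (⟨f.1 c, f.2 c⟩ : ↥C))) ?_
    intro f f' hff
    apply Subtype.ext
    funext c
    have := congrFun hff c
    exact congrArg Subtype.val this
  have horb : MulAction.orbit (pstab L M A) b ⊆
      ⋃ r ∈ R, {m | ∃ h : M ≃[L] M, h ∈ pstab L M A ∧ (∀ c : ↥C, h c = r c) ∧ m = h b} := by
    rintro _ ⟨⟨h, hh⟩, rfl⟩
    have hrR : (fun c : ↥C => h c) ∈ R := by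
      intro c
      show h (c : M) ∈ C
      have h1 : h (c : M) ∈ ⇑h '' C := ⟨c, c.2, rfl⟩
      rwa [hmap h hh] at h1
    exact Set.mem_biUnion hrR ⟨h, hh, fun c => rfl, rfl⟩
  refine Set.Finite.subset (Set.Finite.biUnion hRfin ?_) horb
  intro r hrR
  by_cases hex : ∃ h₀ : M ≃[L] M, h₀ ∈ pstab L M A ∧ ∀ c : ↥C, h₀ c = r c
  · obtain ⟨h₀, hh₀, hr₀⟩ := hex
    refine Set.Finite.subset (hb.image ⇑h₀) ?_
    rintro m ⟨h, hh, hhr, rfl⟩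
    refine ⟨(h₀⁻¹ * h) b, ⟨⟨h₀⁻¹ * h, ?_⟩, rfl⟩, ?_⟩
    · intro c hcC
      show (h₀⁻¹ * h) c = c
      rw [aut_mul_apply, hhr ⟨c, hcC⟩, ← hr₀ ⟨c, hcC⟩, aut_inv_apply,
        FirstOrder.Language.Equiv.symm_apply_apply]
    · show h₀ ((h₀⁻¹ * h) b) = h b
      rw [aut_mul_apply, aut_inv_apply, FirstOrder.Language.Equiv.apply_symm_apply]
  · refine Set.Finite.subset Set.finite_empty ?_
    rintro m ⟨h, hh, hhr, rfl⟩
    exact absurd ⟨h, hh, hhr⟩ hex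

end Idem

section CanonicalG

variable {G : Subgroup (Equiv.Perm ℕ)}

theorem orbitRel_mk_smul {n : ℕ} (g : ↥G) (x : Fin n → ℕ) :
    Quotient.mk (MulAction.orbitRel G (Fin n → ℕ)) (fun i => (g : Equiv.Perm ℕ) (x i)) =
      Quotient.mk (MulAction.orbitRel G (Fin n → ℕ)) x := by
  refine Quotient.sound ?_
  exact ⟨g, rfl⟩

/-- Each element of `G` is an automorphism of the canonical structure. -/
def toAutG (g : ↥G) : ℕ ≃[canonicalLanguage G] ℕ where
  toEquiv := (g : Equiv.Perm ℕ)
  map_fun' := fun {n} f _ => f.elim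
  map_rel' := fun {n} r x => by
    show (Quotient.mk (MulAction.orbitRel G (Fin n → ℕ)) (⇑(g : Equiv.Perm ℕ) ∘ x) = r) ↔
      (Quotient.mk (MulAction.orbitRel G (Fin n → ℕ)) x = r)
    rw [show ⇑(g : Equiv.Perm ℕ) ∘ x = fun i => (g : Equiv.Perm ℕ) (x i) from rfl,
      orbitRel_mk_smul g x]

@[simp] theorem toAutG_apply (g : ↥G) (a : ℕ) : toAutG g a = (g : Equiv.Perm ℕ) a := rfl

end CanonicalG
section Bounds

variable {G : Subgroup (Equiv.Perm ℕ)}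

theorem pstab_orbit_quot_finite
    (holig : ∀ n : ℕ, Finite (MulAction.orbitRel.Quotient G (Fin n → ℕ)))
    {A : Set ℕ} (hA : A.Finite) :
    Finite (Quotient (MulAction.orbitRel (pstab (canonicalLanguage G) ℕ A) ℕ)) := by
  classical
  set l := hA.toFinset.toList with hldef
  have hl : ∀ x, x ∈ l ↔ x ∈ A := fun x => by
    rw [hldef, Finset.mem_toList, Set.Finite.mem_toFinset]
  set m := l.length with hmdef
  set a : Fin m → ℕ := l.get with hadef
  haveI := holig (m + 1)
  refine finite_quotient_of_code (Q := MulAction.orbitRel.Quotient G (Fin (m+1) → ℕ)) _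
    (fun b => Quotient.mk _ (Fin.snoc a b)) ?_
  intro b b' hbb
  obtain ⟨g, hg⟩ := Quotient.exact hbb
  have hg2 : g • (Fin.snoc a b' : Fin (m+1) → ℕ) = (Fin.snoc a b : Fin (m+1) → ℕ) := hg
  have hg' : ∀ j : Fin (m+1),
      (g : Equiv.Perm ℕ) ((Fin.snoc a b' : Fin (m+1) → ℕ) j) =
        (Fin.snoc a b : Fin (m+1) → ℕ) j := by
    intro j
    exact congrFun hg2 j
  have h2 := hg' (Fin.last m)
  rw [Fin.snoc_last, Fin.snoc_last] at h2
  have hfix : toAutG g ∈ pstab (canonicalLanguage G) ℕ A := by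
    intro x hx
    obtain ⟨i, hi⟩ : ∃ i : Fin m, a i = x := List.mem_iff_get.mp ((hl x).2 hx)
    have h1 := hg' i.castSucc
    rw [Fin.snoc_castSucc, Fin.snoc_castSucc] at h1
    show (g : Equiv.Perm ℕ) x = x
    rw [← hi]
    exact h1
  exact ⟨⟨toAutG g, hfix⟩, h2⟩

theorem aclg_finite
    (holig : ∀ n : ℕ, Finite (MulAction.orbitRel.Quotient G (Fin n → ℕ)))
    {A : Set ℕ} (hA : A.Finite) : (aclg (canonicalLanguage G) ℕ A).Finite := by
  haveI := pstab_orbit_quot_finite holig hA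
  set H := pstab (canonicalLanguage G) ℕ A with hH
  set T : Quotient (MulAction.orbitRel H ℕ) → Set ℕ :=
    fun q => {b | Quotient.mk (MulAction.orbitRel H ℕ) b = q ∧ (MulAction.orbit H b).Finite}
    with hT
  have hsub : aclg (canonicalLanguage G) ℕ A ⊆ ⋃ q, T q := by
    intro b hb
    exact Set.mem_iUnion.mpr ⟨Quotient.mk _ b, rfl, hb⟩
  refine Set.Finite.subset (Set.finite_iUnion ?_) hsub
  intro q
  by_cases hne : (T q).Nonempty
  · obtain ⟨b₀, hb₀q, hb₀fin⟩ := hne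
    refine Set.Finite.subset hb₀fin ?_
    rintro b ⟨hbq, _⟩
    exact Quotient.exact (hbq.trans hb₀q.symm)
  · rw [Set.not_nonempty_iff_eq_empty] at hne
    rw [hne]
    exact Set.finite_empty

theorem exists_enum {S : Set ℕ} (hS : S.Finite) (hne : S.Nonempty) {B : ℕ}
    (hB : S.ncard ≤ B) : ∃ f : Fin B → ℕ, Set.range f = S := by
  classical
  have hpos : 0 < S.ncard := (Set.ncard_pos hS).mpr hne
  have hcard : hS.toFinset.card = S.ncard := (Set.ncard_eq_toFinset_card S hS).symm
  set e := hS.toFinset.orderIsoOfFin hcard with he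
  refine ⟨fun j => (e ⟨min j (S.ncard - 1), by omega⟩ : ℕ), ?_⟩
  ext x
  constructor
  · rintro ⟨j, rfl⟩
    exact hS.mem_toFinset.mp (e _).2
  · intro hx
    have hx' : x ∈ hS.toFinset := hS.mem_toFinset.mpr hx
    set i := e.symm ⟨x, hx'⟩ with hi
    refine ⟨⟨i, by omega⟩, ?_⟩
    have hmin : min (i : ℕ) (S.ncard - 1) = (i : ℕ) := by
      have := i.isLt
      omega
    show (e ⟨min (i : ℕ) (S.ncard - 1), by omega⟩ : ℕ) = x
    have h3 : (⟨min (i : ℕ) (S.ncard - 1), by omega⟩ : Fin S.ncard) = i := Fin.ext hmin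
    rw [h3, hi]
    simp

end Bounds
section AkBound

variable {G : Subgroup (Equiv.Perm ℕ)}

theorem exists_card_bound
    (holig : ∀ n : ℕ, Finite (MulAction.orbitRel.Quotient G (Fin n → ℕ)))
    (m : ℕ) :
    ∃ C : ℕ, ∀ A : Set ℕ, A.Finite → A.ncard ≤ m →
      (aclg (canonicalLanguage G) ℕ A).ncard ≤ C := by
  have hj : ∀ j : ℕ, ∃ Cj : ℕ, ∀ x : Fin j → ℕ,
      (aclg (canonicalLanguage G) ℕ (Set.range x)).ncard ≤ Cj := by
    intro j
    haveI := holig j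
    set F : (Fin j → ℕ) → ℕ := fun x => (aclg (canonicalLanguage G) ℕ (Set.range x)).ncard
      with hF
    have hconst : ∀ x y : Fin j → ℕ, MulAction.orbitRel G (Fin j → ℕ) x y → F x = F y := by
      intro x y hxy
      obtain ⟨g, hg⟩ := hxy
      have hg2 : (fun i => (g : Equiv.Perm ℕ) (y i)) = x := hg
      have hr : Set.range x = ⇑(toAutG g) '' Set.range y := by
        rw [← hg2]
        ext z
        simp only [Set.mem_range, Set.mem_image]
        constructor
        · rintro ⟨i, rfl⟩; exact ⟨y i, ⟨i, rfl⟩, rfl⟩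
        · rintro ⟨w, ⟨i, rfl⟩, rfl⟩; exact ⟨i, rfl⟩
      rw [hF]
      show (aclg (canonicalLanguage G) ℕ (Set.range x)).ncard =
        (aclg (canonicalLanguage G) ℕ (Set.range y)).ncard
      rw [hr, aclg_image (toAutG g)]
      exact Set.ncard_image_of_injective _ (toAutG g).injective
    set F' : MulAction.orbitRel.Quotient G (Fin j → ℕ) → ℕ := Quotient.lift F hconst with hF'
    obtain ⟨C, hC⟩ := (Set.finite_range F').bddAbove
    refine ⟨C, fun x => ?_⟩
    have : F x = F' (Quotient.mk _ x) := rfl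
    show F x ≤ C
    rw [this]
    exact hC ⟨Quotient.mk _ x, rfl⟩
  choose Cf hCf using hj
  refine ⟨(Finset.range (m+1)).sup Cf, ?_⟩
  intro A hA hAm
  rcases A.eq_empty_or_nonempty with rfl | hne
  · have h0 : (∅ : Set ℕ) = Set.range (fun _ : Fin 0 => (0:ℕ)) := (Set.range_eq_empty _).symm
    rw [h0]
    exact (hCf 0 _).trans (Finset.le_sup (Finset.mem_range.mpr (by omega)))
  · obtain ⟨f, hf⟩ := exists_enum hA hne (le_refl A.ncard)
    rw [← hf]
    exact (hCf A.ncard f).trans (Finset.le_sup (Finset.mem_range.mpr (by omega)))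

theorem Aplus_finite
    (holig : ∀ n : ℕ, Finite (MulAction.orbitRel.Quotient G (Fin n → ℕ)))
    {K : Set ℕ} (hK : K ∈ Aplus (canonicalLanguage G) ℕ) : K.Finite := by
  rcases hK with ⟨A, hA, rfl⟩ | hK
  · exact aclg_finite holig hA
  · rw [Set.mem_singleton_iff] at hK
    subst hK
    exact (aclg_finite holig Set.finite_empty).subset (dclg0_subset_aclg ∅)

theorem exists_Ak_bound
    (holig : ∀ n : ℕ, Finite (MulAction.orbitRel.Quotient G (Fin n → ℕ)))
    (k : ℕ) :
    ∃ B : ℕ, ∀ K ∈ Ak (canonicalLanguage G) ℕ k, K.Finite ∧ K.Nonempty ∧ K.ncard ≤ B := by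
  choose β hβ using exists_card_bound holig
  have hd0 : (dclg0 (canonicalLanguage G) ℕ).ncard ≤ β 0 := by
    refine le_trans (Set.ncard_le_ncard (dclg0_subset_aclg ∅) (aclg_finite holig
      Set.finite_empty)) ?_
    exact hβ 0 ∅ Set.finite_empty (by simp)
  set b : ℕ → ℕ := fun i => Nat.rec (β 0) (fun _ bi => max bi (max (β (bi + 1)) (β 0))) i
    with hb
  have hbs : ∀ i, b (i+1) = max (b i) (max (β (b i + 1)) (β 0)) := fun i => rfl
  have hmono : ∀ i, b i ≤ b (i+1) := fun i => by rw [hbs]; exact le_max_left _ _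
  have hmono' : ∀ i i', i ≤ i' → b i ≤ b i' := by
    intro i i' h
    induction h with
    | refl => exact le_rfl
    | step _ ih => exact ih.trans (hmono _)
  refine ⟨b k, ?_⟩
  intro K hK
  obtain ⟨hAA, hneq, j, c, hj, h0, hlast, hadj⟩ := hK
  have hfin : K.Finite := Aplus_finite holig (Or.inl hAA)
  have hdsub : dclg0 (canonicalLanguage G) ℕ ⊆ K := by
    obtain ⟨A, hA, rfl⟩ := hAA
    exact dclg0_subset_aclg A
  have hne : K.Nonempty := by
    rcases Set.eq_empty_or_nonempty K with h | h
    · exact absurd ((Set.subset_empty_iff.mp (h ▸ hdsub)).trans h.symm).symm hneq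
    · exact h
  refine ⟨hfin, hne, ?_⟩
  have key : ∀ i : ℕ, ∀ hi : i ≤ j, (c ⟨i, by omega⟩).ncard ≤ b i := by
    intro i
    induction i with
    | zero =>
      intro _
      have e0 : (⟨0, by omega⟩ : Fin (j+1)) = 0 := by
        apply Fin.ext
        simp
      rw [e0, h0]
      exact hd0
    | succ i ih =>
      intro hi
      have hci : (c ⟨i, by omega⟩).ncard ≤ b i := ih (by omega)
      have hadji : hasseAdj (Aplus (canonicalLanguage G) ℕ) (c ⟨i, by omega⟩)
          (c ⟨i+1, by omega⟩) := hadj ⟨i, by omega⟩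
      have hCifin : (c ⟨i, by omega⟩).Finite := by
        rcases hadji with ⟨hmem1, _, _, _⟩ | ⟨_, hmem1, _, _⟩ <;>
          exact Aplus_finite holig hmem1
      rcases hadji with ⟨hmem1, hmem2, hss, hno⟩ | ⟨hmem2, hmem1, hss, hno⟩
      · -- up step
        rcases hmem2 with ⟨A2, hA2, hC2⟩ | hd
        · obtain ⟨x, hx1, hx2⟩ := Set.exists_of_ssubset hss
          set D := insert x (c ⟨i, by omega⟩) with hD
          have hDfin : D.Finite := hCifin.insert x
          have hDsub : D ⊆ c ⟨i+1, by omega⟩ := by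
            intro z hz
            rcases Set.mem_insert_iff.mp hz with rfl | hz
            · exact hx1
            · exact hss.1 hz
          have hsub2 : aclg (canonicalLanguage G) ℕ D ⊆ c ⟨i+1, by omega⟩ := by
            have := aclg_mono (L := canonicalLanguage G) (M := ℕ) hDsub
            rwa [hC2, aclg_idem (aclg_finite holig hA2), ← hC2] at this
          have hsub1 : c ⟨i, by omega⟩ ⊂ aclg (canonicalLanguage G) ℕ D := by
            refine Set.ssubset_iff_subset_ne.mpr ⟨?_, ?_⟩
            · exact (Set.subset_insert x _).trans (subset_aclg D)
            · intro habs
              exact hx2 (habs ▸ subset_aclg D (Set.mem_insert x _))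
          have heq : aclg (canonicalLanguage G) ℕ D = c ⟨i+1, by omega⟩ := by
            by_contra hne'
            exact hno ⟨aclg (canonicalLanguage G) ℕ D, Or.inl ⟨D, hDfin, rfl⟩, hsub1,
              Set.ssubset_iff_subset_ne.mpr ⟨hsub2, hne'⟩⟩
          rw [← heq]
          refine le_trans (hβ (b i + 1) D hDfin ?_) ?_
          · exact le_trans (Set.ncard_insert_le x _) (by omega)
          · rw [hbs]
            exact le_trans (le_max_left _ _) (le_max_right _ _)
        · rw [Set.mem_singleton_iff] at hd
          rw [hd]
          exact hd0.trans (by rw [hbs]; exact le_trans (le_max_right _ _) (le_max_right _ _))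
      · -- down step
        refine le_trans (Set.ncard_le_ncard hss.1 hCifin) (hci.trans (hmono i))
  have hK' : K.ncard ≤ b j := by
    have : c ⟨j, by omega⟩ = K := hlast
    rw [← this]
    exact key j (le_refl j)
  exact hK'.trans (hmono' j k hj)

end AkBound
section MapTriple

variable {L : FirstOrder.Language} {M : Type*} [L.Structure M]

theorem image_symm_image (g : M ≃[L] M) (K : Set M) : ⇑g.symm '' (⇑g '' K) = K := by
  rw [Set.image_image, Set.image_congr' (fun x => g.symm_apply_apply x), Set.image_id']

theorem image_inj (g : M ≃[L] M) {A B : Set M} (h : ⇑g '' A = ⇑g '' B) : A = B := by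
  rw [← image_symm_image g A, h, image_symm_image]

theorem mem_of_image_symm {g : M ≃[L] M} {K : Set M} {a : M} (ha : a ∈ ⇑g '' K) :
    g.symm a ∈ K := by
  obtain ⟨b, hb, rfl⟩ := ha
  rwa [g.symm_apply_apply]

theorem p_congr {K K' : Set M} (p : ↥K ≃ ↥K') {a b : M} (ha : a ∈ K) (hb : b ∈ K)
    (h : a = b) : p ⟨a, ha⟩ = p ⟨b, hb⟩ := by cases h; rfl

theorem AkE_coe_eq (k : ℕ) : AkE L M (k : ℕ∞) = Ak L M k := rfl

theorem AkE_image (g : M ≃[L] M) {k : ℕ∞} {K : Set M} (hK : K ∈ AkE L M k) :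
    ⇑g '' K ∈ AkE L M k := by
  cases k with
  | top => exact AA_image g hK
  | coe k => exact Ak_image g hK

theorem ExTriple.ext' {k : ℕ∞} {t s : ExTriple L M k}
    (h1 : t.K = s.K) (h2 : t.K' = s.K')
    (h3 : ∀ (a : M) (ha : a ∈ t.K) (ha' : a ∈ s.K),
      (t.p ⟨a, ha⟩ : M) = (s.p ⟨a, ha'⟩ : M)) : t = s := by
  obtain ⟨K, K', hK, hK', p, iso⟩ := t
  obtain ⟨K2, K2', hK2, hK2', p2, iso2⟩ := s
  dsimp at h1 h2 h3
  subst h1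
  subst h2
  have hp : p = p2 := by
    apply Equiv.ext
    intro a
    apply Subtype.ext
    exact h3 a a.2 a.2
  subst hp
  rfl

/-- Conjugation of a partial bijection by an automorphism. -/
def conjEquiv (g : M ≃[L] M) {K K' : Set M} (p : ↥K ≃ ↥K') :
    ↥(⇑g '' K) ≃ ↥(⇑g '' K') where
  toFun a := ⟨g (p ⟨g.symm a, mem_of_image_symm a.2⟩ : M), ⟨_, (p _).2, rfl⟩⟩
  invFun a := ⟨g (p.symm ⟨g.symm a, mem_of_image_symm a.2⟩ : M), ⟨_, (p.symm _).2, rfl⟩⟩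
  left_inv a := by
    apply Subtype.ext
    show g (p.symm ⟨g.symm _, _⟩ : M) = (a : M)
    rw [p_congr p.symm _ (p ⟨g.symm a, mem_of_image_symm a.2⟩).2
      (g.symm_apply_apply _), Subtype.coe_eta, Equiv.symm_apply_apply,
      g.apply_symm_apply]
  right_inv a := by
    apply Subtype.ext
    show g (p ⟨g.symm _, _⟩ : M) = (a : M)
    rw [p_congr p _ (p.symm ⟨g.symm a, mem_of_image_symm a.2⟩).2
      (g.symm_apply_apply _), Subtype.coe_eta, Equiv.apply_symm_apply,
      g.apply_symm_apply]

theorem conjEquiv_coe (g : M ≃[L] M) {K K' : Set M} (p : ↥K ≃ ↥K') (a : ↥(⇑g '' K)) :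
    (conjEquiv g p a : M) = g (p ⟨g.symm a, mem_of_image_symm a.2⟩ : M) := rfl

theorem conjEquiv_apply_mk (g : M ≃[L] M) {K K' : Set M} (p : ↥K ≃ ↥K') {b : M}
    (hb : b ∈ K) (hb' : g b ∈ ⇑g '' K) :
    (conjEquiv g p ⟨g b, hb'⟩ : M) = g (p ⟨b, hb⟩ : M) := by
  rw [conjEquiv_coe]
  congr 2
  exact p_congr p _ hb (g.symm_apply_apply b)

theorem conjEquiv_iso (g : M ≃[L] M) {K K' : Set M} {p : ↥K ≃ ↥K'}
    (hp : IsPartialIso L M K K' p) :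
    IsPartialIso L M (⇑g '' K) (⇑g '' K') (conjEquiv g p) := by
  constructor
  · intro n f x
    set y : Fin n → ↥K := fun i => ⟨g.symm (x i), mem_of_image_symm (x i).2⟩ with hy
    have hx : ∀ i, ((x i : M)) = g (y i) := fun i => (g.apply_symm_apply _).symm
    obtain ⟨h0, heq⟩ := hp.1 f y
    have hcx : ∀ i, (conjEquiv g p (x i) : M) = g (p (y i) : M) := by
      intro i
      rw [conjEquiv_coe]
    have hfx : FirstOrder.Language.Structure.funMap f (fun i => (x i : M)) =
        g (FirstOrder.Language.Structure.funMap f (fun i => (y i : M))) := by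
      rw [FirstOrder.Language.Equiv.map_fun]
      exact congrArg (FirstOrder.Language.Structure.funMap f) (funext fun i => hx i)
    have hmem' : FirstOrder.Language.Structure.funMap f (fun i => (x i : M)) ∈ ⇑g '' K := by
      rw [hfx]; exact ⟨_, h0, rfl⟩
    refine ⟨hmem', ?_⟩
    rw [conjEquiv_coe]
    have hA : g.symm ((⟨FirstOrder.Language.Structure.funMap f (fun i => (x i : M)),
        hmem'⟩ : ↥(⇑g '' K)) : M) = FirstOrder.Language.Structure.funMap f
          (fun i => (y i : M)) := by
      show g.symm (FirstOrder.Language.Structure.funMap f (fun i => (x i : M))) = _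
      rw [hfx, g.symm_apply_apply]
    rw [p_congr p _ h0 hA, heq, FirstOrder.Language.Equiv.map_fun]
    exact congrArg (FirstOrder.Language.Structure.funMap f)
      (funext fun i => (hcx i).symm)
  · intro n r x
    set y : Fin n → ↥K := fun i => ⟨g.symm (x i), mem_of_image_symm (x i).2⟩ with hy
    have hx : (fun i => (x i : M)) = ⇑g ∘ (fun i => (y i : M)) := by
      funext i
      exact (g.apply_symm_apply _).symm
    have hcx : (fun i => (conjEquiv g p (x i) : M)) = ⇑g ∘ (fun i => (p (y i) : M)) := by
      funext i
      rw [conjEquiv_coe]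
      rfl
    rw [hx, hcx, FirstOrder.Language.Equiv.map_rel, FirstOrder.Language.Equiv.map_rel]
    exact hp.2 r y

/-- The action of an automorphism on expanded-structure triples. -/
def mapTriple {k : ℕ∞} (g : M ≃[L] M) (t : ExTriple L M k) : ExTriple L M k where
  K := ⇑g '' t.K
  K' := ⇑g '' t.K'
  hK := AkE_image g t.hK
  hK' := AkE_image g t.hK'
  p := conjEquiv g t.p
  iso := conjEquiv_iso g t.iso

theorem mapTriple_symm_apply {k : ℕ∞} (g : M ≃[L] M) (t : ExTriple L M k) :
    mapTriple g.symm (mapTriple g t) = t := by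
  refine ExTriple.ext' ?_ ?_ ?_
  · exact image_symm_image g t.K
  · exact image_symm_image g t.K'
  · intro a ha ha'
    show (conjEquiv g.symm (conjEquiv g t.p) ⟨a, ha⟩ : M) = _
    rw [conjEquiv_coe, conjEquiv_coe, g.symm_apply_apply]
    refine congrArg Subtype.val (p_congr t.p _ ha' ?_)
    show g.symm (g.symm.symm a) = a
    exact FirstOrder.Language.Equiv.apply_symm_apply g.symm a

theorem mapTriple_apply_symm {k : ℕ∞} (g : M ≃[L] M) (t : ExTriple L M k) :
    mapTriple g (mapTriple g.symm t) = t := by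
  have h := mapTriple_symm_apply g.symm t
  rwa [FirstOrder.Language.Equiv.symm_symm] at h

/-- The permutation of triples induced by an automorphism. -/
def exPermOf (k : ℕ∞) (g : M ≃[L] M) : Equiv.Perm (ExTriple L M k) where
  toFun := mapTriple g
  invFun := mapTriple g.symm
  left_inv := mapTriple_symm_apply g
  right_inv := mapTriple_apply_symm g

end MapTriple
section ExAutMem

variable {L : FirstOrder.Language} {M : Type*} [L.Structure M]

theorem isIdTriple_mapTriple_iff {k : ℕ∞} (g : M ≃[L] M) (t : ExTriple L M k) :
    IsIdTriple L M (mapTriple g t) ↔ IsIdTriple L M t := by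
  constructor
  · rintro ⟨h1, h2⟩
    refine ⟨image_inj g h1, ?_⟩
    intro a
    have h3 : (conjEquiv g t.p ⟨g (a : M), Set.mem_image_of_mem g a.2⟩ : M) = g (a : M) :=
      h2 ⟨g (a : M), Set.mem_image_of_mem g a.2⟩
    rw [conjEquiv_apply_mk g t.p a.2] at h3
    have h4 := g.injective h3
    rwa [Subtype.coe_eta] at h4
  · rintro ⟨h1, h2⟩
    refine ⟨?_, ?_⟩
    · show ⇑g '' t.K = ⇑g '' t.K'
      rw [h1]
    · intro a
      show (conjEquiv g t.p a : M) = (a : M)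
      rw [show (conjEquiv g t.p a : M) = _ from conjEquiv_coe g t.p a, h2 ⟨g.symm a, mem_of_image_symm a.2⟩]
      exact g.apply_symm_apply a

theorem erel_mapTriple_iff {k : ℕ∞} {n : ℕ} (g : M ≃[L] M) (x : Fin n → ExTriple L M k) :
    ERel L M (fun i => mapTriple g (x i)) ↔ ERel L M x := by
  constructor
  · rintro ⟨h, hh⟩
    refine ⟨g⁻¹ * h * g, ?_⟩
    intro i a
    have h2 : h (g (a : M)) = (conjEquiv g (x i).p ⟨g (a : M), Set.mem_image_of_mem g a.2⟩ : M) :=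
      hh i ⟨g (a : M), Set.mem_image_of_mem g a.2⟩
    rw [conjEquiv_apply_mk g (x i).p a.2] at h2
    show (g⁻¹ * h * g) (a : M) = _
    rw [aut_mul_apply, aut_mul_apply, aut_inv_apply, h2,
      FirstOrder.Language.Equiv.symm_apply_apply, Subtype.coe_eta]
  · rintro ⟨h, hh⟩
    refine ⟨g * h * g⁻¹, ?_⟩
    intro i a
    show (g * h * g⁻¹) (a : M) = ((mapTriple g (x i)).p a : M)
    rw [aut_mul_apply, aut_mul_apply, aut_inv_apply,
      hh i ⟨g.symm (a : M), mem_of_image_symm a.2⟩]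
    exact (conjEquiv_coe g (x i).p a).symm

theorem dom_mapTriple_iff {k : ℕ∞} (g : M ≃[L] M) (t s : ExTriple L M k) :
    DomRel L M (mapTriple g t) (mapTriple g s) ↔ DomRel L M t s := by
  unfold DomRel
  rw [isIdTriple_mapTriple_iff]
  constructor
  · rintro ⟨h1, h2⟩
    exact ⟨h1, image_inj g h2⟩
  · rintro ⟨h1, h2⟩
    refine ⟨h1, ?_⟩
    show ⇑g '' s.K = ⇑g '' t.K
    rw [h2]

theorem cod_mapTriple_iff {k : ℕ∞} (g : M ≃[L] M) (t s : ExTriple L M k) :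
    CodRel L M (mapTriple g t) (mapTriple g s) ↔ CodRel L M t s := by
  unfold CodRel
  rw [isIdTriple_mapTriple_iff]
  constructor
  · rintro ⟨h1, h2⟩
    exact ⟨h1, image_inj g h2⟩
  · rintro ⟨h1, h2⟩
    refine ⟨h1, ?_⟩
    show ⇑g '' s.K = ⇑g '' t.K'
    rw [h2]

theorem exPermOf_mem_exAut {k : ℕ∞} (g : M ≃[L] M) : exPermOf k g ∈ exAut L M k := by
  show IsExIso _
  refine ⟨fun t => (isIdTriple_mapTriple_iff g t).symm,
    fun n x => ?_, fun t s => (dom_mapTriple_iff g t s).symm,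
    fun t s => (cod_mapTriple_iff g t s).symm⟩
  exact (erel_mapTriple_iff g x).symm

end ExAutMem
/-- If `G` is an oligomorphic closed subgroup of `Sym(ω)` and `M_G` its
canonical structure, then for every `0 < k < ω` the expanded structure `E^ex_{M_G}(k)` is
ω-categorical, i.e. its automorphism group acts oligomorphically on its domain. -/
theorem stmt_17 (G : Subgroup (Equiv.Perm ℕ))
    (hclosed : IsClosed (G : Set (Equiv.Perm ℕ)))
    (holig : ∀ n : ℕ, Finite (MulAction.orbitRel.Quotient G (Fin n → ℕ)))
    (k : ℕ) (hk : 0 < k) :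
    Oligo ↥(exAut (canonicalLanguage G) ℕ (k : ℕ∞))
      (ExTriple (canonicalLanguage G) ℕ (k : ℕ∞)) := by
  intro n
  obtain ⟨B, hB⟩ := exists_Ak_bound holig k
  set T := ExTriple (canonicalLanguage G) ℕ (k : ℕ∞) with hT
  have henum : ∀ t : T, ∃ u : Fin B → ℕ, Set.range u = t.K := by
    intro t
    obtain ⟨hfin, hne, hcard⟩ := hB t.K t.hK
    exact exists_enum hfin hne hcard
  choose u hu using henum
  have humem : ∀ (t : T) (j : Fin B), u t j ∈ t.K := fun t j =>
    by rw [← hu t]; exact Set.mem_range_self j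
  set v : ∀ _ : T, Fin B → ℕ :=
    fun t j => ((t.p ⟨u t j, humem t j⟩ : ↥t.K') : ℕ) with hv
  have hvrange : ∀ t : T, Set.range (v t) = t.K' := by
    intro t
    ext z
    constructor
    · rintro ⟨j, rfl⟩
      exact (t.p _).2
    · intro hz
      obtain ⟨w, hw⟩ := t.p.surjective ⟨z, hz⟩
      obtain ⟨j, hj⟩ : ∃ j, u t j = (w : ℕ) := Set.mem_range.mp (by rw [hu t]; exact w.2)
      refine ⟨j, ?_⟩
      calc ((t.p ⟨u t j, humem t j⟩ : ↥t.K') : ℕ)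
          = ((t.p ⟨(w : ℕ), w.2⟩ : ↥t.K') : ℕ) :=
            congrArg Subtype.val (p_congr t.p _ w.2 hj)
        _ = ((t.p w : ↥t.K') : ℕ) := by rw [Subtype.coe_eta]
        _ = z := by rw [hw]
  -- finiteness of the coding quotient
  haveI : Finite (MulAction.orbitRel.Quotient G ((Fin n × Bool × Fin B) → ℕ)) := by
    haveI := holig (Fintype.card (Fin n × Bool × Fin B))
    set e := (Fintype.equivFin (Fin n × Bool × Fin B)).symm with he
    refine finite_quotient_of_code
      (Q := MulAction.orbitRel.Quotient G
        (Fin (Fintype.card (Fin n × Bool × Fin B)) → ℕ)) _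
      (fun w => Quotient.mk _ (w ∘ ⇑e)) ?_
    intro w w' hww
    obtain ⟨g, hg⟩ := Quotient.exact hww
    have hgf : g • (w' ∘ ⇑e) = w ∘ ⇑e := hg
    have hg2 : ∀ j, (g : Equiv.Perm ℕ) ((w' ∘ ⇑e) j) = (w ∘ ⇑e) j := by
      intro j
      exact congrFun hgf j
    refine ⟨g, ?_⟩
    funext z
    have h3 := hg2 (e.symm z)
    rw [Function.comp_apply, Function.comp_apply, Equiv.apply_symm_apply] at h3
    exact h3
  -- the coding map
  refine finite_quotient_of_code
    (Q := MulAction.orbitRel.Quotient G ((Fin n × Bool × Fin B) → ℕ)) _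
    (fun x : Fin n → T => Quotient.mk _
      (fun z : Fin n × Bool × Fin B => if z.2.1 then v (x z.1) z.2.2 else u (x z.1) z.2.2))
    ?_
  intro x y hxy
  obtain ⟨g, hg⟩ := Quotient.exact hxy
  have hgf : g • (fun z : Fin n × Bool × Fin B =>
      if z.2.1 then v (y z.1) z.2.2 else u (y z.1) z.2.2) =
      (fun z : Fin n × Bool × Fin B =>
        if z.2.1 then v (x z.1) z.2.2 else u (x z.1) z.2.2) := hg
  have hg2 : ∀ z : Fin n × Bool × Fin B,
      (g : Equiv.Perm ℕ) (if z.2.1 then v (y z.1) z.2.2 else u (y z.1) z.2.2) =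
        (if z.2.1 then v (x z.1) z.2.2 else u (x z.1) z.2.2) := by
    intro z
    exact congrFun hgf z
  have hu_g : ∀ (i : Fin n) (j : Fin B), (g : Equiv.Perm ℕ) (u (y i) j) = u (x i) j :=
    fun i j => hg2 (i, false, j)
  have hv_g : ∀ (i : Fin n) (j : Fin B), (g : Equiv.Perm ℕ) (v (y i) j) = v (x i) j :=
    fun i j => hg2 (i, true, j)
  set gA : ℕ ≃[canonicalLanguage G] ℕ := toAutG g with hgA
  have hK : ∀ i, ⇑gA '' (y i).K = (x i).K := by
    intro i
    rw [← hu (y i), ← hu (x i)]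
    ext z
    constructor
    · rintro ⟨w, ⟨j, rfl⟩, rfl⟩
      exact ⟨j, (hu_g i j).symm⟩
    · rintro ⟨j, rfl⟩
      exact ⟨u (y i) j, ⟨j, rfl⟩, hu_g i j⟩
  have hK' : ∀ i, ⇑gA '' (y i).K' = (x i).K' := by
    intro i
    rw [← hvrange (y i), ← hvrange (x i)]
    ext z
    constructor
    · rintro ⟨w, ⟨j, rfl⟩, rfl⟩
      exact ⟨j, (hv_g i j).symm⟩
    · rintro ⟨j, rfl⟩
      exact ⟨v (y i) j, ⟨j, rfl⟩, hv_g i j⟩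
  have hmap : ∀ i, mapTriple gA (y i) = x i := by
    intro i
    refine ExTriple.ext' (hK i) (hK' i) ?_
    intro a ha ha'
    obtain ⟨j, hj⟩ : ∃ j, u (x i) j = a := Set.mem_range.mp (by rw [hu (x i)]; exact ha')
    show (conjEquiv gA (y i).p ⟨a, ha⟩ : ℕ) = ((x i).p ⟨a, ha'⟩ : ℕ)
    have e1 : (⟨a, ha⟩ : ↥(⇑gA '' (y i).K)) =
        ⟨gA (u (y i) j), Set.mem_image_of_mem gA (humem (y i) j)⟩ :=
      Subtype.ext (by show a = gA (u (y i) j); rw [← hj]; exact (hu_g i j).symm)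
    rw [e1, conjEquiv_apply_mk gA (y i).p (humem (y i) j)]
    have hstep : gA (((y i).p ⟨u (y i) j, humem (y i) j⟩ : ↥((y i).K')) : ℕ) = v (x i) j :=
      hv_g i j
    rw [hstep]
    exact congrArg Subtype.val (p_congr (x i).p (humem (x i) j) ha' hj)
  refine ⟨⟨exPermOf (k : ℕ∞) gA, exPermOf_mem_exAut gA⟩, ?_⟩
  funext i
  show mapTriple gA (y i) = x i
  exact hmap i

end Paper
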